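/- The number of non-crossing equivalence relations (non-crossing partitions) on a linearly ordered set of n elements equals the Catalan number C_n = (1/(n+1))·binomial(2n, n). In particular, for n = 5 there are 42 such partitions. -/

import Mathlib

/-- A partition of `Fin n` (as a `Finpartition` of `univ`) is non-crossing if
there are no `a < b < c < d` with `a, c` in one block and `b, d` in a different block. -/
def IsNoncrossing {n : ℕ} (P : Finpartition (Finset.univ : Finset (Fin n))) : Prop :=
  ∀ s ∈ P.parts, ∀ t ∈ P.parts, s ≠ t →
    ¬ ∃ a b c d : Fin n, a ∈ s ∧ c ∈ s ∧ b ∈ t ∧ d ∈ t ∧ a < b ∧ b < c ∧ c < d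


namespace NCaux

open Finset

attribute [local instance] Classical.propDecidable

def NCrel {m : ℕ} (r : Fin m → Fin m → Prop) : Prop :=
  ∀ a b c d : Fin m, a < b → b < c → c < d → r a c → r b d → r a b

def M (m : ℕ) : Type := {r : Fin m → Fin m → Prop // Equivalence r ∧ NCrel r}

instance (m : ℕ) : Finite (M m) := by unfold M; infer_instance

lemma parts_eq_image_part {m : ℕ} (P : Finpartition (Finset.univ : Finset (Fin m))) :
    P.parts = Finset.univ.image P.part := by
  ext p
  simp only [mem_image, mem_univ, true_and]
  constructor
  · intro hp
    obtain ⟨x, hx⟩ := P.nonempty_of_mem_parts hp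
    exact ⟨x, P.part_eq_of_mem hp hx⟩
  · rintro ⟨a, rfl⟩
    exact P.part_mem.mpr (mem_univ a)

noncomputable def equivM (m : ℕ) :
    {P : Finpartition (Finset.univ : Finset (Fin m)) // IsNoncrossing P} ≃ M m where
  toFun := fun ⟨P, hP⟩ => ⟨fun x y => P.part x = P.part y, by
    refine ⟨⟨fun x => rfl, fun h => h.symm, fun h h' => h.trans h'⟩, ?_⟩
    intro a b c d hab hbc hcd hac hbd
    by_contra hne
    refine hP (P.part a) (P.part_mem.mpr (mem_univ a)) (P.part b) (P.part_mem.mpr (mem_univ b)) hne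
      ⟨a, b, c, d, P.mem_part (mem_univ a), ?_, P.mem_part (mem_univ b), ?_, hab, hbc, hcd⟩
    · rw [hac]; exact P.mem_part (mem_univ c)
    · rw [hbd]; exact P.mem_part (mem_univ d)⟩
  invFun := fun ⟨r, hr⟩ =>
    ⟨Finpartition.ofSetoid (Setoid.mk r hr.1), by
      intro s hs t ht hst ⟨a, b, c, d, has, hcs, hbt, hdt, hab, hbc, hcd⟩
      have hsa := Finpartition.part_eq_of_mem _ hs has
      have htb := Finpartition.part_eq_of_mem _ ht hbt
      have hac : r a c := (Finpartition.mem_part_ofSetoid_iff_rel).mp (by rw [hsa]; exact hcs)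
      have hbd : r b d := (Finpartition.mem_part_ofSetoid_iff_rel).mp (by rw [htb]; exact hdt)
      have hab' : r a b := hr.2 a b c d hab hbc hcd hac hbd
      have hbs : b ∈ s := by
        rw [← hsa]
        exact (Finpartition.mem_part_ofSetoid_iff_rel).mpr hab'
      exact hst (Finpartition.eq_of_mem_parts _ hs ht hbs hbt)⟩
  left_inv := fun ⟨P, hP⟩ => by
    apply Subtype.ext
    apply Finpartition.ext
    rw [parts_eq_image_part, parts_eq_image_part P]
    apply image_congr
    intro a _
    ext b
    rw [Finpartition.mem_part_ofSetoid_iff_rel]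
    change P.part a = P.part b ↔ _
    constructor
    · intro h; rw [h]; exact P.mem_part (mem_univ b)
    · intro h; exact (P.part_eq_of_mem (P.part_mem.mpr (mem_univ a)) h).symm
  right_inv := fun ⟨r, hr⟩ => by
    apply Subtype.ext
    funext x y
    apply propext
    change Finpartition.part _ x = Finpartition.part _ y ↔ r x y
    constructor
    · intro h
      exact (Finpartition.mem_part_ofSetoid_iff_rel).mp
        (by rw [h]; exact Finpartition.mem_part _ (mem_univ y))
    · intro h
      exact (Finpartition.part_eq_of_mem _
        ((Finpartition.part_mem _).mpr (mem_univ x))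
        ((Finpartition.mem_part_ofSetoid_iff_rel).mpr h)).symm


section Rec
variable {n : ℕ}

/-- the minimal positive element related to 0, or `n+1` if there is none. -/
noncomputable def mval (n : ℕ) (r : Fin (n+1) → Fin (n+1) → Prop) : ℕ :=
  if sInf {k : ℕ | 0 < k ∧ ∃ h : k < n + 1, r 0 ⟨k, h⟩} = 0 then n + 1
  else sInf {k : ℕ | 0 < k ∧ ∃ h : k < n + 1, r 0 ⟨k, h⟩}

variable {r : Fin (n+1) → Fin (n+1) → Prop}

lemma mval_spec : (1 ≤ mval n r ∧ mval n r ≤ n + 1) ∧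
    (mval n r ≤ n → ∃ h : mval n r < n + 1, r 0 ⟨mval n r, h⟩) := by
  unfold mval
  split
  · refine ⟨⟨by omega, le_refl _⟩, by omega⟩
  · rename_i hne
    have hS : {k : ℕ | 0 < k ∧ ∃ h : k < n + 1, r 0 ⟨k, h⟩}.Nonempty := by
      by_contra h
      rw [Set.not_nonempty_iff_eq_empty] at h
      rw [h, Nat.sInf_empty] at hne
      exact hne rfl
    obtain ⟨hpos, hlt, hrel⟩ := Nat.sInf_mem hS
    exact ⟨⟨hpos, by omega⟩, fun _ => ⟨hlt, hrel⟩⟩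

lemma one_le_mval : 1 ≤ mval n r := mval_spec.1.1

lemma mval_le : mval n r ≤ n + 1 := mval_spec.1.2

lemma mval_rel (h : mval n r ≤ n) (h' : mval n r < n + 1) : r 0 ⟨mval n r, h'⟩ :=
  (mval_spec.2 h).2

lemma not_rel_of_lt_mval (k : Fin (n+1)) (h0 : 0 < k.1) (hk : k.1 < mval n r) : ¬ r 0 k := by
  intro hr
  have hmem : k.1 ∈ {k : ℕ | 0 < k ∧ ∃ h : k < n + 1, r 0 ⟨k, h⟩} := ⟨h0, k.isLt, hr⟩
  have h1 : sInf {k : ℕ | 0 < k ∧ ∃ h : k < n + 1, r 0 ⟨k, h⟩} ≤ k.1 := Nat.sInf_le hmem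
  have h2 : 0 < sInf {k : ℕ | 0 < k ∧ ∃ h : k < n + 1, r 0 ⟨k, h⟩} :=
    (Nat.sInf_mem ⟨k.1, hmem⟩).1
  unfold mval at hk
  split at hk <;> omega

/-- glue relations on `{1,…,i}` and `{i+1,…,n}` (with `0` joined to `i+1`'s class). -/
def bwdRel (n i : ℕ) (r1 : Fin i → Fin i → Prop) (r2 : Fin (n - i) → Fin (n - i) → Prop) :
    Fin (n+1) → Fin (n+1) → Prop := fun p q =>
  p = q ∨
  (∃ h : 1 ≤ p.1 ∧ p.1 ≤ i ∧ 1 ≤ q.1 ∧ q.1 ≤ i,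
     r1 ⟨p.1 - 1, by omega⟩ ⟨q.1 - 1, by omega⟩) ∨
  (∃ h : i + 1 ≤ p.1 ∧ i + 1 ≤ q.1,
     r2 ⟨p.1 - (i+1), by have := p.isLt; omega⟩ ⟨q.1 - (i+1), by have := q.isLt; omega⟩) ∨
  (∃ h : p.1 = 0 ∧ i + 1 ≤ q.1,
     r2 ⟨0, by have := q.isLt; omega⟩ ⟨q.1 - (i+1), by have := q.isLt; omega⟩) ∨
  (∃ h : q.1 = 0 ∧ i + 1 ≤ p.1,
     r2 ⟨0, by have := p.isLt; omega⟩ ⟨p.1 - (i+1), by have := p.isLt; omega⟩)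

variable {i : ℕ} {r1 : Fin i → Fin i → Prop} {r2 : Fin (n - i) → Fin (n - i) → Prop}

lemma bwdRel_equivalence (h1 : Equivalence r1) (h2 : Equivalence r2) :
    Equivalence (bwdRel n i r1 r2) := by
  constructor
  · exact fun p => Or.inl rfl
  · rintro p q (rfl | ⟨h, hr⟩ | ⟨h, hr⟩ | ⟨h, hr⟩ | ⟨h, hr⟩)
    · exact Or.inl rfl
    · exact Or.inr (Or.inl ⟨by omega, h1.symm hr⟩)
    · exact Or.inr (Or.inr (Or.inl ⟨by omega, h2.symm hr⟩))
    · exact Or.inr (Or.inr (Or.inr (Or.inr ⟨by omega, hr⟩)))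
    · exact Or.inr (Or.inr (Or.inr (Or.inl ⟨by omega, hr⟩)))
  · rintro p q s (rfl | ⟨h, hr⟩ | ⟨h, hr⟩ | ⟨h, hr⟩ | ⟨h, hr⟩) hqs
    · exact hqs
    all_goals rcases hqs with rfl | ⟨h', hr'⟩ | ⟨h', hr'⟩ | ⟨h', hr'⟩ | ⟨h', hr'⟩
    -- p~q by case2
    · exact Or.inr (Or.inl ⟨h, hr⟩)
    · exact Or.inr (Or.inl ⟨by omega, h1.trans hr hr'⟩)
    · exfalso; omega
    · exfalso; omega
    · exfalso; omega
    -- p~q by case3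
    · exact Or.inr (Or.inr (Or.inl ⟨h, hr⟩))
    · exfalso; omega
    · exact Or.inr (Or.inr (Or.inl ⟨by omega, h2.trans hr hr'⟩))
    · exfalso; omega
    · exact Or.inr (Or.inr (Or.inr (Or.inr ⟨by omega, h2.trans hr' (h2.symm hr)⟩)))
    -- p~q by case4
    · exact Or.inr (Or.inr (Or.inr (Or.inl ⟨h, hr⟩)))
    · exfalso; omega
    · exact Or.inr (Or.inr (Or.inr (Or.inl ⟨by omega, h2.trans hr hr'⟩)))
    · exfalso; omega
    · exact Or.inl (Fin.ext (by omega))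
    -- p~q by case5
    · exact Or.inr (Or.inr (Or.inr (Or.inr ⟨h, hr⟩)))
    · exfalso; omega
    · exfalso; omega
    · exact Or.inr (Or.inr (Or.inl ⟨by omega, h2.trans (h2.symm hr) hr'⟩))
    · exfalso; omega

lemma bwdRel_nc (h2 : Equivalence r2) (hn1 : NCrel r1) (hn2 : NCrel r2) :
    NCrel (bwdRel n i r1 r2) := by
  intro a b c d hab hbc hcd hac hbd
  rw [Fin.lt_def] at hab hbc hcd
  rcases hac with rfl | ⟨h, hr⟩ | ⟨h, hr⟩ | ⟨h, hr⟩ | ⟨h, hr⟩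
  · exfalso; omega
  · -- a, c in R1
    rcases hbd with rfl | ⟨h', hr'⟩ | ⟨h', hr'⟩ | ⟨h', hr'⟩ | ⟨h', hr'⟩
    · exfalso; omega
    · refine Or.inr (Or.inl ⟨by omega, ?_⟩)
      exact hn1 _ _ _ _ (Fin.mk_lt_mk.mpr (by omega)) (Fin.mk_lt_mk.mpr (by omega))
        (Fin.mk_lt_mk.mpr (by omega)) hr hr'
    · exfalso; omega
    · exfalso; omega
    · exfalso; omega
  · -- a, c in R2
    rcases hbd with rfl | ⟨h', hr'⟩ | ⟨h', hr'⟩ | ⟨h', hr'⟩ | ⟨h', hr'⟩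
    · exfalso; omega
    · exfalso; omega
    · refine Or.inr (Or.inr (Or.inl ⟨by omega, ?_⟩))
      exact hn2 _ _ _ _ (Fin.mk_lt_mk.mpr (by omega)) (Fin.mk_lt_mk.mpr (by omega))
        (Fin.mk_lt_mk.mpr (by omega)) hr hr'
    · exfalso; omega
    · exfalso; omega
  · -- a = 0, c in R2
    rcases hbd with rfl | ⟨h', hr'⟩ | ⟨h', hr'⟩ | ⟨h', hr'⟩ | ⟨h', hr'⟩
    · exfalso; omega
    · exfalso; omega
    · refine Or.inr (Or.inr (Or.inr (Or.inl ⟨by omega, ?_⟩)))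
      by_cases hb : b.1 = i + 1
      · have e : (⟨b.1 - (i+1), by have := b.isLt; omega⟩ : Fin (n - i)) =
            ⟨0, by have := b.isLt; omega⟩ := Fin.ext (by simp; omega)
        rw [e]
        exact h2.refl _
      · exact hn2 _ _ _ _ (Fin.mk_lt_mk.mpr (by omega)) (Fin.mk_lt_mk.mpr (by omega))
          (Fin.mk_lt_mk.mpr (by omega)) hr hr'
    · exfalso; omega
    · exfalso; omega
  · exfalso; omega

end Rec

section Glue
variable {n i : ℕ} {r1 : Fin i → Fin i → Prop} {r2 : Fin (n - i) → Fin (n - i) → Prop}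

lemma bwdRel_emb1 (h1 : Equivalence r1) (a b : Fin i)
    (ha : a.1 + 1 < n + 1) (hb : b.1 + 1 < n + 1) :
    bwdRel n i r1 r2 ⟨a.1 + 1, ha⟩ ⟨b.1 + 1, hb⟩ ↔ r1 a b := by
  constructor
  · rintro (heq | ⟨h, hr⟩ | ⟨h, hr⟩ | ⟨h, hr⟩ | ⟨h, hr⟩)
    · have hab : a = b := by
        have := congrArg Fin.val heq
        simp only [Fin.val_mk] at this
        exact Fin.ext (by omega)
      exact hab ▸ h1.refl a
    · convert hr using 2 <;> simp only [Fin.ext_iff, Fin.val_mk] <;> omega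
    · exfalso; simp only [Fin.val_mk] at h; have := a.isLt; omega
    · exfalso; simp only [Fin.val_mk] at h; omega
    · exfalso; simp only [Fin.val_mk] at h; omega
  · intro hr
    have hc : 1 ≤ (⟨a.1 + 1, ha⟩ : Fin (n+1)).val ∧ (⟨a.1 + 1, ha⟩ : Fin (n+1)).val ≤ i ∧
        1 ≤ (⟨b.1 + 1, hb⟩ : Fin (n+1)).val ∧ (⟨b.1 + 1, hb⟩ : Fin (n+1)).val ≤ i := by
      simp only [Fin.val_mk]; have := a.isLt; have := b.isLt; omega
    refine Or.inr (Or.inl ⟨hc, ?_⟩)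
    convert hr using 2 <;> simp only [Fin.ext_iff, Fin.val_mk] <;> omega

lemma bwdRel_emb2 (h2 : Equivalence r2) (a b : Fin (n - i))
    (ha : a.1 + i + 1 < n + 1) (hb : b.1 + i + 1 < n + 1) :
    bwdRel n i r1 r2 ⟨a.1 + i + 1, ha⟩ ⟨b.1 + i + 1, hb⟩ ↔ r2 a b := by
  constructor
  · rintro (heq | ⟨h, hr⟩ | ⟨h, hr⟩ | ⟨h, hr⟩ | ⟨h, hr⟩)
    · have hab : a = b := by
        have := congrArg Fin.val heq
        simp only [Fin.val_mk] at this
        exact Fin.ext (by omega)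
      exact hab ▸ h2.refl a
    · exfalso; simp only [Fin.val_mk] at h; omega
    · convert hr using 2 <;> simp only [Fin.ext_iff, Fin.val_mk] <;> omega
    · exfalso; simp only [Fin.val_mk] at h; omega
    · exfalso; simp only [Fin.val_mk] at h; omega
  · intro hr
    have hc : i + 1 ≤ (⟨a.1 + i + 1, ha⟩ : Fin (n+1)).val ∧
        i + 1 ≤ (⟨b.1 + i + 1, hb⟩ : Fin (n+1)).val := by
      simp only [Fin.val_mk]; omega
    refine Or.inr (Or.inr (Or.inl ⟨hc, ?_⟩))
    convert hr using 2 <;> simp only [Fin.ext_iff, Fin.val_mk] <;> omega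

lemma mval_bwdRel (hi : i ≤ n) (h2 : Equivalence r2) :
    mval n (bwdRel n i r1 r2) = i + 1 := by
  set S := {k : ℕ | 0 < k ∧ ∃ h : k < n + 1, bwdRel n i r1 r2 0 ⟨k, h⟩} with hS
  have claimA : ∀ k ∈ S, i + 1 ≤ k := by
    rintro k ⟨hk0, hklt, (heq | ⟨h, hr⟩ | ⟨h, hr⟩ | ⟨h, hr⟩ | ⟨h, hr⟩)⟩
    · have := congrArg Fin.val heq
      simp only [Fin.val_mk, Fin.val_zero] at this
      omega
    · simp only [Fin.val_zero] at h; omega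
    · simp only [Fin.val_zero] at h; omega
    · simp only [Fin.val_zero, Fin.val_mk] at h; omega
    · simp only [Fin.val_zero, Fin.val_mk] at h; omega
  rcases Nat.lt_or_ge i n with hin | hin
  · have hmem : i + 1 ∈ S := by
      refine ⟨by omega, by omega, ?_⟩
      have hc : (0 : Fin (n+1)).val = 0 ∧ i + 1 ≤ (⟨i + 1, by omega⟩ : Fin (n+1)).val :=
        ⟨rfl, le_refl _⟩
      refine Or.inr (Or.inr (Or.inr (Or.inl ⟨hc, ?_⟩)))
      convert h2.refl (⟨0, by omega⟩ : Fin (n - i)) using 2 <;>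
        simp only [Fin.ext_iff, Fin.val_mk] <;> omega
    have hle := Nat.sInf_le hmem
    have hge := claimA _ (Nat.sInf_mem (⟨_, hmem⟩ : S.Nonempty))
    have hsinf : sInf S = i + 1 := le_antisymm hle hge
    unfold mval
    rw [← hS, hsinf]
    simp
  · have hempty : S = ∅ := by
      ext k
      simp only [Set.mem_empty_iff_false, iff_false]
      intro hk
      have h1 := claimA k hk
      obtain ⟨_, hlt, _⟩ := hk
      omega
    unfold mval
    rw [← hS, hempty, Nat.sInf_empty]
    simp
    omega

end Glue
section Glue2
variable {n : ℕ}

lemma glue_eq (r : Fin (n+1) → Fin (n+1) → Prop) (hEq : Equivalence r) (hNC : NCrel r)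
    (r1 : Fin (mval n r - 1) → Fin (mval n r - 1) → Prop)
    (r2 : Fin (n - (mval n r - 1)) → Fin (n - (mval n r - 1)) → Prop)
    (h1 : ∀ a b : Fin (mval n r - 1), r1 a b ↔
      r ⟨a.1 + 1, by have := a.isLt; have := mval_le (n := n) (r := r); omega⟩
        ⟨b.1 + 1, by have := b.isLt; have := mval_le (n := n) (r := r); omega⟩)
    (h2 : ∀ a b : Fin (n - (mval n r - 1)), r2 a b ↔
      r ⟨a.1 + (mval n r - 1) + 1, by have := a.isLt; omega⟩
        ⟨b.1 + (mval n r - 1) + 1, by have := b.isLt; omega⟩) :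
    bwdRel n (mval n r - 1) r1 r2 = r := by
  have hm1 : 1 ≤ mval n r := one_le_mval
  have hm2 : mval n r ≤ n + 1 := mval_le
  set m := mval n r with hm
  set i := m - 1 with hi
  have F1 : ∀ p : Fin (n+1), 0 < p.1 → p.1 ≤ i → ¬ r 0 p := fun p hp1 hp2 =>
    not_rel_of_lt_mval p hp1 (by omega)
  have F4 : ∀ q : Fin (n+1), ∀ _ : i + 1 ≤ q.1,
      (r 0 q ↔ r ⟨m, by have := q.isLt; omega⟩ q) := by
    intro q hq
    have hqlt := q.isLt
    have h0m : r 0 ⟨m, by omega⟩ := mval_rel (by omega) (by omega)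
    exact ⟨fun h => hEq.trans (hEq.symm h0m) h, fun h => hEq.trans h0m h⟩
  have F3 : ∀ p q : Fin (n+1), 1 ≤ p.1 → p.1 ≤ i → i + 1 ≤ q.1 → ¬ r p q := by
    intro p q hp1 hp2 hq hpq
    have hqlt := q.isLt
    have h0m : r 0 ⟨m, by omega⟩ := mval_rel (by omega) (by omega)
    by_cases hqm : q.1 = m
    · have hq' : q = ⟨m, by omega⟩ := Fin.ext (by simp only [Fin.val_mk]; omega)
      rw [hq'] at hpq
      exact F1 p (by omega) hp2 (hEq.trans h0m (hEq.symm hpq))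
    · refine F1 p (by omega) hp2 (hNC 0 p ⟨m, by omega⟩ q ?_ ?_ ?_ h0m hpq) <;>
        (rw [Fin.lt_def]; simp only [Fin.val_zero, Fin.val_mk]; omega)
  funext p q
  apply propext
  constructor
  · rintro (rfl | ⟨h, hr⟩ | ⟨h, hr⟩ | ⟨h, hr⟩ | ⟨h, hr⟩)
    · exact hEq.refl p
    · rw [h1] at hr
      convert hr using 2 <;> simp only [Fin.ext_iff, Fin.val_mk] <;> omega
    · rw [h2] at hr
      convert hr using 2 <;> simp only [Fin.ext_iff, Fin.val_mk] <;> omega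
    · rw [h2] at hr
      have hq : q = (⟨q.1 - (i+1) + i + 1, by have := q.isLt; omega⟩ : Fin (n+1)) :=
        Fin.ext (by simp only [Fin.val_mk]; omega)
      have hp : p = (0 : Fin (n+1)) := Fin.ext (by simp only [Fin.val_zero]; omega)
      rw [hp, hq]
      refine (F4 _ (by simp only [Fin.val_mk]; omega)).mpr ?_
      convert hr using 2 <;> simp only [Fin.ext_iff, Fin.val_mk] <;> omega
    · rw [h2] at hr
      have hp' : p = (⟨p.1 - (i+1) + i + 1, by have := p.isLt; omega⟩ : Fin (n+1)) :=
        Fin.ext (by simp only [Fin.val_mk]; omega)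
      have hq' : q = (0 : Fin (n+1)) := Fin.ext (by simp only [Fin.val_zero]; omega)
      rw [hq', hp']
      refine hEq.symm ?_
      refine (F4 _ (by simp only [Fin.val_mk]; omega)).mpr ?_
      convert hr using 2 <;> simp only [Fin.ext_iff, Fin.val_mk] <;> omega
  · intro hpq
    obtain hp | hp | hp : p.1 = 0 ∨ (1 ≤ p.1 ∧ p.1 ≤ i) ∨ i + 1 ≤ p.1 := by omega
    · obtain hq | hq | hq : q.1 = 0 ∨ (1 ≤ q.1 ∧ q.1 ≤ i) ∨ i + 1 ≤ q.1 := by omega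
      · exact Or.inl (Fin.ext (by omega))
      · exfalso
        have h0q : r 0 q := by
          rw [show (0 : Fin (n+1)) = p from Fin.ext (by simp only [Fin.val_zero]; omega)]
          exact hpq
        exact F1 q (by omega) hq.2 h0q
      · refine Or.inr (Or.inr (Or.inr (Or.inl ⟨⟨hp, hq⟩, ?_⟩)))
        rw [h2]
        have h0q : r 0 q := by
          rw [show (0 : Fin (n+1)) = p from Fin.ext (by simp only [Fin.val_zero]; omega)]
          exact hpq
        have hmq := (F4 q hq).mp h0q
        convert hmq using 2 <;> simp only [Fin.ext_iff, Fin.val_mk] <;> omega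
    · obtain hq | hq | hq : q.1 = 0 ∨ (1 ≤ q.1 ∧ q.1 ≤ i) ∨ i + 1 ≤ q.1 := by omega
      · exfalso
        have h0p : r 0 p := by
          rw [show (0 : Fin (n+1)) = q from Fin.ext (by simp only [Fin.val_zero]; omega)]
          exact hEq.symm hpq
        exact F1 p (by omega) hp.2 h0p
      · refine Or.inr (Or.inl ⟨⟨hp.1, hp.2, hq.1, hq.2⟩, ?_⟩)
        rw [h1]
        convert hpq using 2 <;> simp only [Fin.ext_iff, Fin.val_mk] <;> omega
      · exact absurd hpq (F3 p q hp.1 hp.2 hq)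
    · obtain hq | hq | hq : q.1 = 0 ∨ (1 ≤ q.1 ∧ q.1 ≤ i) ∨ i + 1 ≤ q.1 := by omega
      · refine Or.inr (Or.inr (Or.inr (Or.inr ⟨⟨hq, hp⟩, ?_⟩)))
        rw [h2]
        have h0p : r 0 p := by
          rw [show (0 : Fin (n+1)) = q from Fin.ext (by simp only [Fin.val_zero]; omega)]
          exact hEq.symm hpq
        have hmp := (F4 p hp).mp h0p
        convert hmp using 2 <;> simp only [Fin.ext_iff, Fin.val_mk] <;> omega
      · exact absurd (hEq.symm hpq) (F3 q p hq.1 hq.2 hp)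
      · refine Or.inr (Or.inr (Or.inl ⟨⟨hp, hq⟩, ?_⟩))
        rw [h2]
        convert hpq using 2 <;> simp only [Fin.ext_iff, Fin.val_mk] <;> omega

end Glue2


section Main
variable {n : ℕ}

noncomputable def fwd (r : M (n+1)) : Σ j : Fin (n+1), M (j : ℕ) × M (n - (j : ℕ)) :=
  let i : ℕ := mval n r.1 - 1
  have hi : i ≤ n := by have := mval_le (n := n) (r := r.1); omega
  ⟨⟨i, by omega⟩,
   ⟨fun x y => r.1 ⟨x.1 + 1, by have hx : x.1 < i := x.isLt; omega⟩
               ⟨y.1 + 1, by have hy : y.1 < i := y.isLt; omega⟩,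
    ⟨fun x => r.2.1.refl _, fun h => r.2.1.symm h, fun h h' => r.2.1.trans h h'⟩,
    fun a b c d hab hbc hcd h h' => r.2.2 _ _ _ _
      (Fin.mk_lt_mk.mpr (by have := Fin.lt_def.mp hab; omega))
      (Fin.mk_lt_mk.mpr (by have := Fin.lt_def.mp hbc; omega))
      (Fin.mk_lt_mk.mpr (by have := Fin.lt_def.mp hcd; omega)) h h'⟩,
   ⟨fun x y => r.1 ⟨x.1 + i + 1, by have hx : x.1 < n - i := x.isLt; omega⟩
               ⟨y.1 + i + 1, by have hy : y.1 < n - i := y.isLt; omega⟩,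
    ⟨fun x => r.2.1.refl _, fun h => r.2.1.symm h, fun h h' => r.2.1.trans h h'⟩,
    fun a b c d hab hbc hcd h h' => r.2.2 _ _ _ _
      (Fin.mk_lt_mk.mpr (by have := Fin.lt_def.mp hab; omega))
      (Fin.mk_lt_mk.mpr (by have := Fin.lt_def.mp hbc; omega))
      (Fin.mk_lt_mk.mpr (by have := Fin.lt_def.mp hcd; omega)) h h'⟩⟩

noncomputable def bwd (x : Σ j : Fin (n+1), M (j : ℕ) × M (n - (j : ℕ))) : M (n+1) :=
  ⟨bwdRel n x.1 x.2.1.1 x.2.2.1,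
   bwdRel_equivalence x.2.1.2.1 x.2.2.2.1,
   bwdRel_nc x.2.2.2.1 x.2.1.2.2 x.2.2.2.2⟩

lemma bwd_fwd (r : M (n+1)) : bwd (fwd r) = r := by
  obtain ⟨r, hEq, hNC⟩ := r
  apply Subtype.ext
  exact glue_eq r hEq hNC _ _ (fun a b => Iff.rfl) (fun a b => Iff.rfl)

lemma bwd_injective : Function.Injective (bwd (n := n)) := by
  rintro ⟨⟨i, hilt⟩, ⟨r1, hr1⟩, ⟨r2, hr2⟩⟩ ⟨⟨j, hjlt⟩, ⟨s1, hs1⟩, ⟨s2, hs2⟩⟩ h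
  have hrel : bwdRel n i r1 r2 = bwdRel n j s1 s2 := congrArg Subtype.val h
  have hij : i = j := by
    have e1 := mval_bwdRel (n := n) (i := i) (r1 := r1) (r2 := r2) (by omega) hr2.1
    have e2 := mval_bwdRel (n := n) (i := j) (r1 := s1) (r2 := s2) (by omega) hs2.1
    rw [hrel] at e1
    omega
  subst hij
  have e1 : r1 = s1 := by
    funext a b
    apply propext
    have ha : a.1 + 1 < n + 1 := by have := a.isLt; simp only [Fin.val_mk] at this; omega
    have hb : b.1 + 1 < n + 1 := by have := b.isLt; simp only [Fin.val_mk] at this; omega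
    calc r1 a b ↔ bwdRel n i r1 r2 ⟨a.1 + 1, ha⟩ ⟨b.1 + 1, hb⟩ :=
          (bwdRel_emb1 hr1.1 a b ha hb).symm
      _ ↔ s1 a b := by rw [hrel]; exact bwdRel_emb1 hs1.1 a b ha hb
  have e2 : r2 = s2 := by
    funext a b
    apply propext
    have ha : a.1 + i + 1 < n + 1 := by have := a.isLt; simp only [Fin.val_mk] at this; omega
    have hb : b.1 + i + 1 < n + 1 := by have := b.isLt; simp only [Fin.val_mk] at this; omega
    calc r2 a b ↔ bwdRel n i r1 r2 ⟨a.1 + i + 1, ha⟩ ⟨b.1 + i + 1, hb⟩ :=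
          (bwdRel_emb2 hr2.1 a b ha hb).symm
      _ ↔ s2 a b := by rw [hrel]; exact bwdRel_emb2 hs2.1 a b ha hb
  subst e1
  subst e2
  rfl

lemma card_step (n : ℕ) :
    Nat.card (M (n+1)) = Nat.card (Σ j : Fin (n+1), M (j : ℕ) × M (n - (j : ℕ))) :=
  (Nat.card_eq_of_bijective bwd ⟨bwd_injective, fun r => ⟨fwd r, bwd_fwd r⟩⟩).symm

instance : Unique (M 0) where
  default := ⟨fun _ _ => True, ⟨fun _ => trivial, fun _ => trivial, fun _ _ => trivial⟩,
    fun a => a.elim0⟩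
  uniq := fun _ => Subtype.ext (funext fun a => a.elim0)

noncomputable instance (m : ℕ) : Fintype (M m) := Fintype.ofFinite _

lemma card_M : ∀ m, Nat.card (M m) = catalan m := by
  intro m
  induction m using Nat.strong_induction_on with
  | _ m IH =>
    match m with
    | 0 => rw [Nat.card_unique, catalan_zero]
    | (k + 1) =>
      rw [catalan_succ, card_step k, Nat.card_eq_fintype_card, Fintype.card_sigma]
      apply Finset.sum_congr rfl
      intro j _
      rw [Fintype.card_prod, ← Nat.card_eq_fintype_card, ← Nat.card_eq_fintype_card,
        IH j (by have := j.isLt; omega), IH (k - j) (by omega)]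

end Main
end NCaux

/-- The number of non-crossing partitions of a linearly ordered `n`-element set is the
Catalan number `binomial(2n, n) / (n + 1)`; in particular there are 42 of them for `n = 5`. -/
theorem stmt_7 :
    (∀ n : ℕ, Nat.card {P : Finpartition (Finset.univ : Finset (Fin n)) // IsNoncrossing P} =
      Nat.centralBinom n / (n + 1)) ∧
    Nat.card {P : Finpartition (Finset.univ : Finset (Fin 5)) // IsNoncrossing P} = 42 := by
  have key : ∀ n : ℕ,
      Nat.card {P : Finpartition (Finset.univ : Finset (Fin n)) // IsNoncrossing P} = catalan n :=
    fun n => by rw [Nat.card_congr (NCaux.equivM n), NCaux.card_M]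
  constructor
  · intro n
    rw [key n, catalan_eq_centralBinom_div]
  · rw [key 5]
    have h4 : catalan 4 = 14 := by
      rw [catalan_succ]
      norm_num [Fin.sum_univ_succ, catalan_two, catalan_three, catalan_one, catalan_zero]
    rw [catalan_succ]
    norm_num [Fin.sum_univ_succ, catalan_two, catalan_three, catalan_one, catalan_zero, h4]
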